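/- arXiv:1903.00429 — 2 statements merged into one kernel-verified Lean document; each statement's English description precedes it below -/
import Mathlib

section
/- For the elastic energy E on H, and for all u, φ ∈ H, one has (∇E(u), φ) = 2∫₀¹ u''(x)φ''(x)/(1+u'(x)²)^{5/2} dx − 5∫₀¹ u''(x)² u'(x) φ'(x)/(1+u'(x)²)^{7/2} dx. Moreover, ‖∇E(u)‖ ≤ (1 + (5/2)·C_P)·E(u) + 1, where C_P denotes the operator norm of the embedding W^{2,2}(0,1) ∩ W₀^{1,2}(0,1) ↪ W^{1,∞}(0,1). -/
open MeasureTheory Set Filter Topology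

noncomputable section

/-- Membership in `H = W^{2,2}(0,1) ∩ W₀^{1,2}(0,1)`: `u1` is the (continuous) derivative of
`u` on `[0,1]`, `u1` is absolutely continuous with (integrable) derivative `u2 ∈ L²(0,1)`,
and `u(0) = u(1) = 0`. -/
def MemH (u u1 u2 : ℝ → ℝ) : Prop :=
  (∀ x ∈ Icc (0:ℝ) 1, HasDerivWithinAt u (u1 x) (Icc 0 1) x) ∧
  (∀ x ∈ Icc (0:ℝ) 1, u1 x = u1 0 + ∫ t in (0:ℝ)..x, u2 t) ∧
  IntegrableOn u2 (Icc (0:ℝ) 1) ∧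
  IntegrableOn (fun x => (u2 x) ^ 2) (Icc (0:ℝ) 1) ∧
  u 0 = 0 ∧ u 1 = 0

/-- Membership in the obstacle set `C = { u ∈ H : u ≥ ψ a.e. }`. -/
def MemC (ψ : ℝ → ℝ) (u u1 u2 : ℝ → ℝ) : Prop :=
  MemH u u1 u2 ∧ ∀ᵐ x ∂(volume.restrict (Icc (0:ℝ) 1)), ψ x ≤ u x

/-- The inner product of `H`: `(u,v) = ∫₀¹ u'' v''` (in terms of the second derivatives). -/
def Hip (u2 v2 : ℝ → ℝ) : ℝ := ∫ x in (0:ℝ)..1, u2 x * v2 x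

/-- The norm of `H`: `‖u‖ = (∫₀¹ (u'')²)^{1/2}` (in terms of the second derivative). -/
def Hnorm (u2 : ℝ → ℝ) : ℝ := Real.sqrt (∫ x in (0:ℝ)..1, (u2 x) ^ 2)

/-- The elastic (Willmore / Euler) bending energy `E(u) = ∫₀¹ u''²/(1+u'²)^{5/2}`. -/
def elE (u1 u2 : ℝ → ℝ) : ℝ :=
  ∫ x in (0:ℝ)..1, (u2 x) ^ 2 / (1 + (u1 x) ^ 2) ^ ((5:ℝ)/2)

/-- The claimed formula for the gradient pairing:
`(∇E(u), φ) = 2∫₀¹ u''φ''/(1+u'²)^{5/2} - 5∫₀¹ u''²u'φ'/(1+u'²)^{7/2}`. -/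
def elDE (u1 u2 φ1 φ2 : ℝ → ℝ) : ℝ :=
  2 * (∫ x in (0:ℝ)..1, u2 x * φ2 x / (1 + (u1 x) ^ 2) ^ ((5:ℝ)/2))
  - 5 * (∫ x in (0:ℝ)..1, (u2 x) ^ 2 * u1 x * φ1 x / (1 + (u1 x) ^ 2) ^ ((7:ℝ)/2))

lemma hasDerivAt_aux (p P q Q ε : ℝ) :
    HasDerivAt (fun e : ℝ => (q + e * Q) ^ 2 / (1 + (p + e * P) ^ 2) ^ ((5:ℝ)/2))
      (2 * ((q + ε * Q) * Q / (1 + (p + ε * P) ^ 2) ^ ((5:ℝ)/2))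
        - 5 * ((q + ε * Q) ^ 2 * (p + ε * P) * P / (1 + (p + ε * P) ^ 2) ^ ((7:ℝ)/2))) ε := by
  have hA : ∀ e : ℝ, (0:ℝ) < 1 + (p + e * P) ^ 2 := fun e => by positivity
  have h1 : HasDerivAt (fun e : ℝ => q + e * Q) Q ε := by
    simpa using ((hasDerivAt_id ε).mul_const Q).const_add q
  have h1' : HasDerivAt (fun e : ℝ => p + e * P) P ε := by
    simpa using ((hasDerivAt_id ε).mul_const P).const_add p
  have h2 : HasDerivAt (fun e : ℝ => (q + e * Q) ^ 2) (2 * (q + ε * Q) * Q) ε := by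
    simpa [mul_comm, mul_assoc, mul_left_comm] using h1.fun_pow 2
  have h3 : HasDerivAt (fun e : ℝ => 1 + (p + e * P) ^ 2) (2 * (p + ε * P) * P) ε := by
    simpa [mul_comm, mul_assoc, mul_left_comm] using (h1'.pow 2).const_add 1
  have h4 : HasDerivAt (fun e : ℝ => (1 + (p + e * P) ^ 2) ^ (-((5:ℝ)/2)))
      ((-((5:ℝ)/2)) * (1 + (p + ε * P) ^ 2) ^ (-((5:ℝ)/2) - 1) * (2 * (p + ε * P) * P)) ε := by
    exact (Real.hasDerivAt_rpow_const (Or.inl (hA ε).ne')).comp ε h3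
  have h5 := h2.fun_mul h4
  have hfun : (fun e : ℝ => (q + e * Q) ^ 2 / (1 + (p + e * P) ^ 2) ^ ((5:ℝ)/2))
      = fun e : ℝ => (q + e * Q) ^ 2 * (1 + (p + e * P) ^ 2) ^ (-((5:ℝ)/2)) := by
    funext e
    rw [Real.rpow_neg (hA e).le, div_eq_mul_inv]
  rw [hfun]
  refine h5.congr_deriv ?_
  have e1 : (-((5:ℝ)/2) - 1) = -((7:ℝ)/2) := by norm_num
  rw [e1, Real.rpow_neg (hA ε).le, Real.rpow_neg (hA ε).le]
  ring

lemma bound_aux (p P q Q M ε : ℝ) (hε : |ε| ≤ 1) (hP : |P| ≤ M) :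
    |2 * ((q + ε * Q) * Q / (1 + (p + ε * P) ^ 2) ^ ((5:ℝ)/2))
      - 5 * ((q + ε * Q) ^ 2 * (p + ε * P) * P / (1 + (p + ε * P) ^ 2) ^ ((7:ℝ)/2))|
      ≤ (2 + 5 * M) * (|q| + |Q|) ^ 2 := by
  set s := p + ε * P with hs
  set r := q + ε * Q with hr
  have hA1 : (1:ℝ) ≤ 1 + s ^ 2 := by nlinarith [sq_nonneg s]
  have hA0 : (0:ℝ) < 1 + s ^ 2 := by positivity
  have h5 : (1:ℝ) ≤ (1 + s ^ 2) ^ ((5:ℝ)/2) := Real.one_le_rpow hA1 (by norm_num)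
  have h55 : (0:ℝ) < (1 + s ^ 2) ^ ((5:ℝ)/2) := lt_of_lt_of_le one_pos h5
  have h7 : |s| ≤ (1 + s ^ 2) ^ ((7:ℝ)/2) := by
    calc |s| ≤ 1 + s ^ 2 := by nlinarith [sq_nonneg (|s| - 1), sq_abs s]
    _ = (1 + s ^ 2) ^ (1:ℝ) := (Real.rpow_one _).symm
    _ ≤ (1 + s ^ 2) ^ ((7:ℝ)/2) := Real.rpow_le_rpow_of_exponent_le hA1 (by norm_num)
  have h75 : (0:ℝ) < (1 + s ^ 2) ^ ((7:ℝ)/2) := Real.rpow_pos_of_pos hA0 _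
  have hM0 : 0 ≤ M := le_trans (abs_nonneg P) hP
  have hr' : |r| ≤ |q| + |Q| := by
    calc |r| ≤ |q| + |ε * Q| := abs_add_le q (ε * Q)
    _ ≤ |q| + |Q| := by rw [abs_mul]; nlinarith [abs_nonneg Q]
  have t1 : |2 * (r * Q / (1 + s ^ 2) ^ ((5:ℝ)/2))| ≤ 2 * (|q| + |Q|) ^ 2 := by
    rw [abs_mul, abs_div, abs_of_pos h55, abs_two]
    have hb : |r * Q| ≤ (|q| + |Q|) ^ 2 := by
      rw [abs_mul]
      nlinarith [abs_nonneg q, abs_nonneg Q, abs_nonneg r, abs_nonneg (r * Q)]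
    have := div_le_self (abs_nonneg (r * Q)) h5
    nlinarith [abs_nonneg (r * Q), div_nonneg (abs_nonneg (r * Q)) h55.le]
  have t2 : |5 * (r ^ 2 * s * P / (1 + s ^ 2) ^ ((7:ℝ)/2))| ≤ 5 * M * (|q| + |Q|) ^ 2 := by
    rw [abs_mul, abs_div, abs_of_pos h75]
    have h5' : |(5:ℝ)| = 5 := by norm_num
    have inner : |r ^ 2 * s * P| / (1 + s ^ 2) ^ ((7:ℝ)/2) ≤ M * (|q| + |Q|) ^ 2 := by
      rw [div_le_iff₀ h75]
      have e0 : |r ^ 2 * s * P| = r ^ 2 * (|s| * |P|) := by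
        rw [abs_mul, abs_mul, abs_of_nonneg (sq_nonneg r), mul_assoc]
      have e1 : r ^ 2 ≤ (|q| + |Q|) ^ 2 := by
        nlinarith [sq_abs r, abs_nonneg r, abs_nonneg q, abs_nonneg Q]
      have e2 : |s| * |P| ≤ (1 + s ^ 2) ^ ((7:ℝ)/2) * M :=
        mul_le_mul h7 hP (abs_nonneg P) h75.le
      have hc : (0:ℝ) ≤ |s| * |P| := mul_nonneg (abs_nonneg s) (abs_nonneg P)
      have e3 : r ^ 2 * (|s| * |P|) ≤ (|q| + |Q|) ^ 2 * ((1 + s ^ 2) ^ ((7:ℝ)/2) * M) :=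
        mul_le_mul e1 e2 hc (sq_nonneg _)
      rw [e0]
      nlinarith [e3]
    rw [h5']
    linarith [inner]
  calc |2 * (r * Q / (1 + s ^ 2) ^ ((5:ℝ)/2))
      - 5 * (r ^ 2 * s * P / (1 + s ^ 2) ^ ((7:ℝ)/2))|
      ≤ |2 * (r * Q / (1 + s ^ 2) ^ ((5:ℝ)/2))|
        + |5 * (r ^ 2 * s * P / (1 + s ^ 2) ^ ((7:ℝ)/2))| := abs_sub _ _
    _ ≤ 2 * (|q| + |Q|) ^ 2 + 5 * M * (|q| + |Q|) ^ 2 := add_le_add t1 t2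
    _ = (2 + 5 * M) * (|q| + |Q|) ^ 2 := by ring

lemma ptwise_aux (a b c M : ℝ) (hb : |b| ≤ M) :
    |a ^ 2 * c * b / (1 + c ^ 2) ^ ((7:ℝ)/2)| ≤ (M / 2) * (a ^ 2 / (1 + c ^ 2) ^ ((5:ℝ)/2)) := by
  have hA0 : (0:ℝ) < 1 + c ^ 2 := by positivity
  have h75 : (0:ℝ) < (1 + c ^ 2) ^ ((7:ℝ)/2) := Real.rpow_pos_of_pos hA0 _
  have h55 : (0:ℝ) < (1 + c ^ 2) ^ ((5:ℝ)/2) := Real.rpow_pos_of_pos hA0 _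
  have hM0 : 0 ≤ M := le_trans (abs_nonneg b) hb
  have e0 : |a ^ 2 * c * b| = a ^ 2 * (|c| * |b|) := by
    rw [abs_mul, abs_mul, abs_of_nonneg (sq_nonneg a), mul_assoc]
  rw [abs_div, abs_of_pos h75, e0, div_le_iff₀ h75]
  have hsplit : (1 + c ^ 2) ^ ((7:ℝ)/2) = (1 + c ^ 2) ^ ((5:ℝ)/2) * (1 + c ^ 2) := by
    rw [show (7:ℝ)/2 = 5/2 + 1 by norm_num, Real.rpow_add hA0, Real.rpow_one]
  rw [hsplit]
  have key : |c| * |b| ≤ ((1 + c ^ 2) / 2) * M := by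
    have h2c : 2 * |c| ≤ 1 + c ^ 2 := by nlinarith [sq_nonneg (|c| - 1), sq_abs c]
    nlinarith [abs_nonneg c, abs_nonneg b, mul_le_mul (le_refl (|c|)) hb (abs_nonneg b) (abs_nonneg c)]
  have : M / 2 * (a ^ 2 / (1 + c ^ 2) ^ ((5:ℝ)/2)) * ((1 + c ^ 2) ^ ((5:ℝ)/2) * (1 + c ^ 2))
      = M / 2 * a ^ 2 * (1 + c ^ 2) := by
    field_simp
  rw [this]
  nlinarith [mul_le_mul_of_nonneg_left key (sq_nonneg a)]

lemma cs_aux {μ : Measure ℝ} {f g : ℝ → ℝ}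
    (hfm : AEStronglyMeasurable f μ) (hgm : AEStronglyMeasurable g μ)
    (hf : Integrable (fun x => f x ^ 2) μ) (hg : Integrable (fun x => g x ^ 2) μ) :
    ∫ x, |f x * g x| ∂μ ≤ Real.sqrt (∫ x, f x ^ 2 ∂μ) * Real.sqrt (∫ x, g x ^ 2 ∂μ) := by
  have hpq : Real.HolderConjugate 2 2 := Real.holderConjugate_iff.mpr ⟨one_lt_two, by norm_num⟩
  have h2 : ENNReal.ofReal (2:ℝ) = 2 := by norm_num
  have hfℒ : MemLp (fun x => |f x|) (ENNReal.ofReal (2:ℝ)) μ := by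
    rw [h2]
    exact (memLp_two_iff_integrable_sq (by simpa [Real.norm_eq_abs] using hfm.norm)).mpr (by simpa [sq_abs] using hf)
  have hgℒ : MemLp (fun x => |g x|) (ENNReal.ofReal (2:ℝ)) μ := by
    rw [h2]
    exact (memLp_two_iff_integrable_sq (by simpa [Real.norm_eq_abs] using hgm.norm)).mpr (by simpa [sq_abs] using hg)
  have key := MeasureTheory.integral_mul_le_Lp_mul_Lq_of_nonneg hpq
    (ae_of_all μ fun x => abs_nonneg (f x)) (ae_of_all μ fun x => abs_nonneg (g x)) hfℒ hgℒ
  have e1 : ∀ x, |f x| * |g x| = |f x * g x| := fun x => (abs_mul _ _).symm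
  have e2 : (∫ x, |f x| ^ (2:ℝ) ∂μ) = ∫ x, f x ^ 2 ∂μ := by
    congr 1; funext x
    rw [show ((2:ℝ)) = ((2:ℕ):ℝ) by norm_num, Real.rpow_natCast, sq_abs]
  have e3 : (∫ x, |g x| ^ (2:ℝ) ∂μ) = ∫ x, g x ^ 2 ∂μ := by
    congr 1; funext x
    rw [show ((2:ℝ)) = ((2:ℕ):ℝ) by norm_num, Real.rpow_natCast, sq_abs]
  simp only [e1, e2, e3] at key
  calc ∫ x, |f x * g x| ∂μ ≤ (∫ x, f x ^ 2 ∂μ) ^ (1/(2:ℝ)) * (∫ x, g x ^ 2 ∂μ) ^ (1/(2:ℝ)) := key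
    _ = Real.sqrt (∫ x, f x ^ 2 ∂μ) * Real.sqrt (∫ x, g x ^ 2 ∂μ) := by
      rw [Real.sqrt_eq_rpow, Real.sqrt_eq_rpow]

/-- **Gradient formula and estimate.** For all `u, φ ∈ H` the derivative of the elastic
energy at `u` in direction `φ` (i.e. `(∇E(u), φ)`) equals
`2∫₀¹ u''φ''/(1+u'²)^{5/2} - 5∫₀¹ u''²u'φ'/(1+u'²)^{7/2}`; in particular, if `C_P` is an
embedding constant of `H ↪ W^{1,∞}(0,1)`, then
`‖∇E(u)‖ ≤ (1 + (5/2)C_P)·E(u) + 1`, i.e. `|(∇E(u),φ)| ≤ ((1 + (5/2)C_P)·E(u) + 1)·‖φ‖`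
for all `φ ∈ H`. -/
theorem elastic_gradient_formula_and_estimate
    (Cp : ℝ)
    (hCp : ∀ w w1 w2 : ℝ → ℝ, MemH w w1 w2 →
      ∀ x ∈ Icc (0:ℝ) 1, |w x| ≤ Cp * Hnorm w2 ∧ |w1 x| ≤ Cp * Hnorm w2) :
    ∀ u u1 u2 : ℝ → ℝ, MemH u u1 u2 → ∀ φ φ1 φ2 : ℝ → ℝ, MemH φ φ1 φ2 →
      HasDerivAt (fun ε : ℝ =>
          elE (fun x => u1 x + ε * φ1 x) (fun x => u2 x + ε * φ2 x))
        (elDE u1 u2 φ1 φ2) 0 ∧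
      |elDE u1 u2 φ1 φ2| ≤ ((1 + (5/2) * Cp) * elE u1 u2 + 1) * Hnorm φ2 := by
  intro u u1 u2 hu φ φ1 φ2 hφ
  obtain ⟨-, hu1e, hu2i, hu2sq, -, -⟩ := hu
  obtain ⟨-, hφ1e, hφ2i, hφ2sq, -, -⟩ := id hφ
  have h01 : (0:ℝ) ≤ 1 := zero_le_one
  have hIoc : uIoc (0:ℝ) 1 = Ioc (0:ℝ) 1 := uIoc_of_le h01
  set M : ℝ := Cp * Hnorm φ2 with hMdef
  have hMφ : ∀ x ∈ Icc (0:ℝ) 1, |φ1 x| ≤ M := fun x hx => (hCp φ φ1 φ2 hφ x hx).2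
  have hM0 : 0 ≤ M := le_trans (abs_nonneg _) (hMφ 0 ⟨le_refl _, h01⟩)
  -- basic positivity of denominators
  have hA1 : ∀ s : ℝ, (1:ℝ) ≤ 1 + s ^ 2 := fun s => by nlinarith [sq_nonneg s]
  have hA0 : ∀ s : ℝ, (0:ℝ) < 1 + s ^ 2 := fun s => by positivity
  have hden1 : ∀ (s c : ℝ), 0 ≤ c → (1:ℝ) ≤ (1 + s ^ 2) ^ c :=
    fun s c hc => Real.one_le_rpow (hA1 s) hc
  have hdenpos : ∀ (s c : ℝ), (0:ℝ) < (1 + s ^ 2) ^ c :=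
    fun s c => Real.rpow_pos_of_pos (hA0 s) c
  -- measurability
  have hu2m : AEStronglyMeasurable u2 (volume.restrict (Ioc (0:ℝ) 1)) :=
    (hu2i.mono_set Ioc_subset_Icc_self).aestronglyMeasurable
  have hφ2m : AEStronglyMeasurable φ2 (volume.restrict (Ioc (0:ℝ) 1)) :=
    (hφ2i.mono_set Ioc_subset_Icc_self).aestronglyMeasurable
  have hprim : ∀ {w2 : ℝ → ℝ}, IntegrableOn w2 (Icc (0:ℝ) 1) → ∀ (w1 : ℝ → ℝ),
      (∀ x ∈ Icc (0:ℝ) 1, w1 x = w1 0 + ∫ t in (0:ℝ)..x, w2 t) →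
      AEStronglyMeasurable w1 (volume.restrict (Ioc (0:ℝ) 1)) := by
    intro w2 hw2 w1 hw1
    have hint : IntegrableOn w2 (uIcc (0:ℝ) 1) := by rwa [uIcc_of_le h01]
    have hcont : ContinuousOn (fun x => w1 0 + ∫ t in (0:ℝ)..x, w2 t) (Icc (0:ℝ) 1) := by
      have h := (intervalIntegral.continuousOn_primitive_interval hint)
      rw [uIcc_of_le h01] at h
      exact continuousOn_const.add h
    have hgm : AEStronglyMeasurable (fun x => w1 0 + ∫ t in (0:ℝ)..x, w2 t)
        (volume.restrict (Icc (0:ℝ) 1)) := hcont.aestronglyMeasurable measurableSet_Icc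
    refine (hgm.mono_measure (Measure.restrict_mono Ioc_subset_Icc_self le_rfl)).congr ?_
    filter_upwards [ae_restrict_mem measurableSet_Ioc] with x hx
    exact (hw1 x (Ioc_subset_Icc_self hx)).symm
  have hu1m : AEStronglyMeasurable u1 (volume.restrict (Ioc (0:ℝ) 1)) := hprim hu2i u1 hu1e
  have hφ1m : AEStronglyMeasurable φ1 (volume.restrict (Ioc (0:ℝ) 1)) := hprim hφ2i φ1 hφ1e
  have habs : ∀ {f : ℝ → ℝ}, AEStronglyMeasurable f (volume.restrict (Ioc (0:ℝ) 1)) →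
      AEStronglyMeasurable (fun x => |f x|) (volume.restrict (Ioc (0:ℝ) 1)) :=
    fun hf => by simpa [Real.norm_eq_abs] using hf.norm
  have hsq : ∀ {f : ℝ → ℝ}, AEStronglyMeasurable f (volume.restrict (Ioc (0:ℝ) 1)) →
      AEStronglyMeasurable (fun x => f x ^ 2) (volume.restrict (Ioc (0:ℝ) 1)) :=
    fun hf => by simpa [pow_two, Pi.mul_def] using hf.mul hf
  have hdiv : ∀ {f g : ℝ → ℝ}, AEStronglyMeasurable f (volume.restrict (Ioc (0:ℝ) 1)) →
      AEStronglyMeasurable g (volume.restrict (Ioc (0:ℝ) 1)) →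
      AEStronglyMeasurable (fun x => f x / g x) (volume.restrict (Ioc (0:ℝ) 1)) :=
    fun hf hg => (hf.aemeasurable.div hg.aemeasurable).aestronglyMeasurable
  have hdm : ∀ (ε c : ℝ), 0 ≤ c →
      AEStronglyMeasurable (fun x => (1 + (u1 x + ε * φ1 x) ^ 2) ^ c)
        (volume.restrict (Ioc (0:ℝ) 1)) := by
    intro ε c hc
    have hb : AEStronglyMeasurable (fun x => 1 + (u1 x + ε * φ1 x) ^ 2)
        (volume.restrict (Ioc (0:ℝ) 1)) :=
      aestronglyMeasurable_const.add (hsq (hu1m.add (hφ1m.const_mul ε)))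
    exact (Real.continuous_rpow_const hc).comp_aestronglyMeasurable hb
  have hdm0 : ∀ (c : ℝ), 0 ≤ c →
      AEStronglyMeasurable (fun x => (1 + (u1 x) ^ 2) ^ c)
        (volume.restrict (Ioc (0:ℝ) 1)) := by
    intro c hc
    have hb : AEStronglyMeasurable (fun x => 1 + (u1 x) ^ 2)
        (volume.restrict (Ioc (0:ℝ) 1)) :=
      aestronglyMeasurable_const.add (hsq hu1m)
    exact (Real.continuous_rpow_const hc).comp_aestronglyMeasurable hb
  -- integrability
  have hu2sqI : IntegrableOn (fun x => u2 x ^ 2) (Ioc (0:ℝ) 1) :=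
    hu2sq.mono_set Ioc_subset_Icc_self
  have hφ2sqI : IntegrableOn (fun x => φ2 x ^ 2) (Ioc (0:ℝ) 1) :=
    hφ2sq.mono_set Ioc_subset_Icc_self
  have hsumI : IntegrableOn (fun x => (|u2 x| + |φ2 x|) ^ 2) (Ioc (0:ℝ) 1) := by
    refine Integrable.mono' ((hu2sqI.const_mul 2).add (hφ2sqI.const_mul 2))
      (hsq ((habs hu2m).add (habs hφ2m)))
      (ae_of_all _ fun x => ?_)
    simp only [Pi.add_apply]
    rw [Real.norm_eq_abs, abs_of_nonneg (sq_nonneg _)]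
    nlinarith [sq_abs (u2 x), sq_abs (φ2 x), sq_nonneg (|u2 x| - |φ2 x|)]
  -- the derivative part
  have hF_meas : ∀ᶠ ε in 𝓝 (0:ℝ),
      AEStronglyMeasurable (fun x =>
        (u2 x + ε * φ2 x) ^ 2 / (1 + (u1 x + ε * φ1 x) ^ 2) ^ ((5:ℝ)/2))
        (volume.restrict (uIoc (0:ℝ) 1)) := by
    refine Eventually.of_forall fun ε => ?_
    rw [hIoc]
    have hnum : AEStronglyMeasurable (fun x => (u2 x + ε * φ2 x) ^ 2)
        (volume.restrict (Ioc (0:ℝ) 1)) := hsq (hu2m.add (hφ2m.const_mul ε))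
    exact hdiv hnum (hdm ε ((5:ℝ)/2) (by norm_num))
  have hF_int : IntervalIntegrable (fun x =>
      (u2 x + (0:ℝ) * φ2 x) ^ 2 / (1 + (u1 x + (0:ℝ) * φ1 x) ^ 2) ^ ((5:ℝ)/2)) volume 0 1 := by
    rw [intervalIntegrable_iff, hIoc]
    refine Integrable.mono' hsumI
      (hdiv (hsq (hu2m.add (hφ2m.const_mul 0))) (hdm 0 ((5:ℝ)/2) (by norm_num)))
      (ae_of_all _ fun x => ?_)
    rw [Real.norm_eq_abs, abs_div, abs_of_nonneg (sq_nonneg _),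
      abs_of_pos (hdenpos _ _)]
    calc (u2 x + 0 * φ2 x) ^ 2 / (1 + (u1 x + 0 * φ1 x) ^ 2) ^ ((5:ℝ)/2)
        ≤ (u2 x + 0 * φ2 x) ^ 2 := div_le_self (sq_nonneg _) (hden1 _ _ (by norm_num))
      _ ≤ (|u2 x| + |φ2 x|) ^ 2 := by
          nlinarith [sq_abs (u2 x), abs_nonneg (u2 x), abs_nonneg (φ2 x)]
  have hF'_meas : AEStronglyMeasurable (fun x =>
      2 * ((u2 x + (0:ℝ) * φ2 x) * φ2 x / (1 + (u1 x + (0:ℝ) * φ1 x) ^ 2) ^ ((5:ℝ)/2))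
        - 5 * ((u2 x + (0:ℝ) * φ2 x) ^ 2 * (u1 x + (0:ℝ) * φ1 x) * φ1 x
            / (1 + (u1 x + (0:ℝ) * φ1 x) ^ 2) ^ ((7:ℝ)/2))) (volume.restrict (uIoc (0:ℝ) 1)) := by
    rw [hIoc]
    refine AEStronglyMeasurable.sub ?_ ?_
    · exact (hdiv ((hu2m.add (hφ2m.const_mul 0)).mul hφ2m) (hdm 0 ((5:ℝ)/2) (by norm_num))).const_mul 2
    · exact (hdiv (((hsq (hu2m.add (hφ2m.const_mul 0))).mul
        (hu1m.add (hφ1m.const_mul 0))).mul hφ1m) (hdm 0 ((7:ℝ)/2) (by norm_num))).const_mul 5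
  have h_bound : ∀ᵐ t ∂(volume : Measure ℝ), t ∈ uIoc (0:ℝ) 1 →
      ∀ ε ∈ Metric.ball (0:ℝ) 1,
        ‖2 * ((u2 t + ε * φ2 t) * φ2 t / (1 + (u1 t + ε * φ1 t) ^ 2) ^ ((5:ℝ)/2))
          - 5 * ((u2 t + ε * φ2 t) ^ 2 * (u1 t + ε * φ1 t) * φ1 t
              / (1 + (u1 t + ε * φ1 t) ^ 2) ^ ((7:ℝ)/2))‖
          ≤ (2 + 5 * M) * (|u2 t| + |φ2 t|) ^ 2 := by
    refine ae_of_all _ fun t ht ε hε => ?_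
    have hε1 : |ε| ≤ 1 := by
      have := mem_ball_iff_norm.mp hε
      rw [sub_zero, Real.norm_eq_abs] at this
      exact this.le
    have hP : |φ1 t| ≤ M := hMφ t (Ioc_subset_Icc_self (hIoc ▸ ht))
    rw [Real.norm_eq_abs]
    exact bound_aux (u1 t) (φ1 t) (u2 t) (φ2 t) M ε hε1 hP
  have h_bdInt : IntervalIntegrable (fun t => (2 + 5 * M) * (|u2 t| + |φ2 t|) ^ 2)
      volume 0 1 := by
    rw [intervalIntegrable_iff, hIoc]
    exact hsumI.const_mul _
  have h_diff : ∀ᵐ t ∂(volume : Measure ℝ), t ∈ uIoc (0:ℝ) 1 →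
      ∀ ε ∈ Metric.ball (0:ℝ) 1, HasDerivAt
        (fun e : ℝ => (u2 t + e * φ2 t) ^ 2 / (1 + (u1 t + e * φ1 t) ^ 2) ^ ((5:ℝ)/2))
        (2 * ((u2 t + ε * φ2 t) * φ2 t / (1 + (u1 t + ε * φ1 t) ^ 2) ^ ((5:ℝ)/2))
          - 5 * ((u2 t + ε * φ2 t) ^ 2 * (u1 t + ε * φ1 t) * φ1 t
              / (1 + (u1 t + ε * φ1 t) ^ 2) ^ ((7:ℝ)/2))) ε :=
    ae_of_all _ fun t _ ε _ => hasDerivAt_aux (u1 t) (φ1 t) (u2 t) (φ2 t) ε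
  have main := intervalIntegral.hasDerivAt_integral_of_dominated_loc_of_deriv_le
    (F := fun ε x => (u2 x + ε * φ2 x) ^ 2 / (1 + (u1 x + ε * φ1 x) ^ 2) ^ ((5:ℝ)/2))
    (F' := fun ε x =>
      2 * ((u2 x + ε * φ2 x) * φ2 x / (1 + (u1 x + ε * φ1 x) ^ 2) ^ ((5:ℝ)/2))
        - 5 * ((u2 x + ε * φ2 x) ^ 2 * (u1 x + ε * φ1 x) * φ1 x
            / (1 + (u1 x + ε * φ1 x) ^ 2) ^ ((7:ℝ)/2)))
    (Metric.ball_mem_nhds 0 one_pos) hF_meas hF_int hF'_meas h_bound h_bdInt h_diff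
  -- identify the derivative value
  have hI1 : IntervalIntegrable (fun t => u2 t * φ2 t / (1 + (u1 t) ^ 2) ^ ((5:ℝ)/2))
      volume 0 1 := by
    rw [intervalIntegrable_iff, hIoc]
    refine Integrable.mono' (hu2sqI.add hφ2sqI)
      (hdiv (hu2m.mul hφ2m) (hdm0 ((5:ℝ)/2) (by norm_num))) (ae_of_all _ fun x => ?_)
    rw [Real.norm_eq_abs, abs_div, abs_of_pos (hdenpos _ _)]
    calc |u2 x * φ2 x| / (1 + (u1 x) ^ 2) ^ ((5:ℝ)/2)
        ≤ |u2 x * φ2 x| := div_le_self (abs_nonneg _) (hden1 _ _ (by norm_num))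
      _ ≤ u2 x ^ 2 + φ2 x ^ 2 := by
          rw [abs_mul]
          nlinarith [sq_abs (u2 x), sq_abs (φ2 x), sq_nonneg (|u2 x| - |φ2 x|)]
  have hI2 : IntervalIntegrable (fun t => u2 t ^ 2 * u1 t * φ1 t
      / (1 + (u1 t) ^ 2) ^ ((7:ℝ)/2)) volume 0 1 := by
    rw [intervalIntegrable_iff, hIoc]
    refine Integrable.mono' (hu2sqI.const_mul (M / 2))
      (hdiv (((hsq hu2m).mul hu1m).mul hφ1m) (hdm0 ((7:ℝ)/2) (by norm_num)))
      ?_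
    filter_upwards [ae_restrict_mem measurableSet_Ioc] with x hx
    rw [Real.norm_eq_abs]
    calc |u2 x ^ 2 * u1 x * φ1 x / (1 + (u1 x) ^ 2) ^ ((7:ℝ)/2)|
        ≤ (M / 2) * (u2 x ^ 2 / (1 + (u1 x) ^ 2) ^ ((5:ℝ)/2)) :=
          ptwise_aux (u2 x) (φ1 x) (u1 x) M (hMφ x (Ioc_subset_Icc_self hx))
      _ ≤ (M / 2) * u2 x ^ 2 := by
          refine mul_le_mul_of_nonneg_left ?_ (by linarith)
          exact div_le_self (sq_nonneg _) (hden1 _ _ (by norm_num))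
  have hval : (∫ t in (0:ℝ)..1,
      (2 * ((u2 t + (0:ℝ) * φ2 t) * φ2 t / (1 + (u1 t + (0:ℝ) * φ1 t) ^ 2) ^ ((5:ℝ)/2))
        - 5 * ((u2 t + (0:ℝ) * φ2 t) ^ 2 * (u1 t + (0:ℝ) * φ1 t) * φ1 t
            / (1 + (u1 t + (0:ℝ) * φ1 t) ^ 2) ^ ((7:ℝ)/2)))) = elDE u1 u2 φ1 φ2 := by
    have h0 : ∀ t : ℝ,
        2 * ((u2 t + (0:ℝ) * φ2 t) * φ2 t / (1 + (u1 t + (0:ℝ) * φ1 t) ^ 2) ^ ((5:ℝ)/2))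
          - 5 * ((u2 t + (0:ℝ) * φ2 t) ^ 2 * (u1 t + (0:ℝ) * φ1 t) * φ1 t
              / (1 + (u1 t + (0:ℝ) * φ1 t) ^ 2) ^ ((7:ℝ)/2))
        = 2 * (u2 t * φ2 t / (1 + (u1 t) ^ 2) ^ ((5:ℝ)/2))
          - 5 * (u2 t ^ 2 * u1 t * φ1 t / (1 + (u1 t) ^ 2) ^ ((7:ℝ)/2)) := fun t => by
      norm_num
    rw [intervalIntegral.integral_congr (fun t _ => h0 t),
      intervalIntegral.integral_sub (hI1.const_mul 2) (hI2.const_mul 5),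
      intervalIntegral.integral_const_mul, intervalIntegral.integral_const_mul, elDE]
  constructor
  · have hd := main.2
    rw [hval] at hd
    simpa [elE] using hd
  · -- the estimate
    have hEeq : elE u1 u2 = ∫ x in Ioc (0:ℝ) 1, u2 x ^ 2 / (1 + (u1 x) ^ 2) ^ ((5:ℝ)/2) := by
      rw [elE, intervalIntegral.integral_of_le h01]
    have hNeq : Hnorm φ2 = Real.sqrt (∫ x in Ioc (0:ℝ) 1, φ2 x ^ 2) := by
      rw [Hnorm, intervalIntegral.integral_of_le h01]
    have hE0 : 0 ≤ elE u1 u2 := by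
      rw [hEeq]
      exact integral_nonneg fun x => by positivity
    have hN0 : 0 ≤ Hnorm φ2 := Real.sqrt_nonneg _
    -- integrability of the square of f := u2 / A^{5/4} etc.
    have hsq54 : ∀ x : ℝ, ((1 + (u1 x) ^ 2) ^ ((5:ℝ)/4)) ^ (2:ℕ)
        = (1 + (u1 x) ^ 2) ^ ((5:ℝ)/2) := fun x => by
      rw [← Real.rpow_natCast ((1 + (u1 x) ^ 2) ^ ((5:ℝ)/4)) 2,
        ← Real.rpow_mul (hA0 (u1 x)).le]
      norm_num
    have hfsqI : Integrable (fun x => (u2 x / (1 + (u1 x) ^ 2) ^ ((5:ℝ)/4)) ^ 2)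
        (volume.restrict (Ioc (0:ℝ) 1)) := by
      refine Integrable.mono' hu2sqI (hsq (hdiv hu2m (hdm0 ((5:ℝ)/4) (by norm_num))))
        (ae_of_all _ fun x => ?_)
      rw [Real.norm_eq_abs, abs_of_nonneg (sq_nonneg _), div_pow, hsq54 x]
      exact div_le_self (sq_nonneg _) (hden1 _ _ (by norm_num))
    have hgsqI : Integrable (fun x => (φ2 x / (1 + (u1 x) ^ 2) ^ ((5:ℝ)/4)) ^ 2)
        (volume.restrict (Ioc (0:ℝ) 1)) := by
      refine Integrable.mono' hφ2sqI (hsq (hdiv hφ2m (hdm0 ((5:ℝ)/4) (by norm_num))))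
        (ae_of_all _ fun x => ?_)
      rw [Real.norm_eq_abs, abs_of_nonneg (sq_nonneg _), div_pow, hsq54 x]
      exact div_le_self (sq_nonneg _) (hden1 _ _ (by norm_num))
    have hfg : ∀ x : ℝ, u2 x * φ2 x / (1 + (u1 x) ^ 2) ^ ((5:ℝ)/2)
        = (u2 x / (1 + (u1 x) ^ 2) ^ ((5:ℝ)/4)) * (φ2 x / (1 + (u1 x) ^ 2) ^ ((5:ℝ)/4)) := by
      intro x
      rw [div_mul_div_comm, ← Real.rpow_add (hA0 (u1 x))]
      norm_num
    have hfsq_eq : (∫ x in Ioc (0:ℝ) 1, (u2 x / (1 + (u1 x) ^ 2) ^ ((5:ℝ)/4)) ^ 2)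
        = elE u1 u2 := by
      rw [hEeq]
      refine integral_congr_ae (ae_of_all _ fun x => ?_)
      simp only [div_pow, hsq54 x]
    have hI1abs : |∫ t in (0:ℝ)..1, u2 t * φ2 t / (1 + (u1 t) ^ 2) ^ ((5:ℝ)/2)|
        ≤ Real.sqrt (elE u1 u2) * Hnorm φ2 := by
      rw [intervalIntegral.integral_of_le h01]
      calc |∫ t in Ioc (0:ℝ) 1, u2 t * φ2 t / (1 + (u1 t) ^ 2) ^ ((5:ℝ)/2)|
          ≤ ∫ t in Ioc (0:ℝ) 1, |u2 t * φ2 t / (1 + (u1 t) ^ 2) ^ ((5:ℝ)/2)| := by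
            exact
              norm_integral_le_integral_norm (μ := volume.restrict (Ioc (0:ℝ) 1))
                (fun t => u2 t * φ2 t / (1 + (u1 t) ^ 2) ^ ((5:ℝ)/2))
        _ = ∫ t in Ioc (0:ℝ) 1, |(u2 t / (1 + (u1 t) ^ 2) ^ ((5:ℝ)/4))
              * (φ2 t / (1 + (u1 t) ^ 2) ^ ((5:ℝ)/4))| := by
            refine integral_congr_ae (ae_of_all _ fun x => ?_)
            simp only [hfg x]
        _ ≤ Real.sqrt (∫ x in Ioc (0:ℝ) 1, (u2 x / (1 + (u1 x) ^ 2) ^ ((5:ℝ)/4)) ^ 2)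
              * Real.sqrt (∫ x in Ioc (0:ℝ) 1, (φ2 x / (1 + (u1 x) ^ 2) ^ ((5:ℝ)/4)) ^ 2) :=
            cs_aux (hdiv hu2m (hdm0 ((5:ℝ)/4) (by norm_num))) (hdiv hφ2m (hdm0 ((5:ℝ)/4) (by norm_num)))
              hfsqI hgsqI
        _ ≤ Real.sqrt (elE u1 u2) * Hnorm φ2 := by
            rw [hfsq_eq]
            refine mul_le_mul_of_nonneg_left ?_ (Real.sqrt_nonneg _)
            rw [hNeq]
            refine Real.sqrt_le_sqrt (integral_mono hgsqI hφ2sqI fun x => ?_)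
            rw [div_pow, hsq54 x]
            exact div_le_self (sq_nonneg _) (hden1 _ _ (by norm_num))
    have hdiv52I : Integrable (fun x => u2 x ^ 2 / (1 + (u1 x) ^ 2) ^ ((5:ℝ)/2))
        (volume.restrict (Ioc (0:ℝ) 1)) := by
      refine Integrable.mono' hu2sqI (hdiv (hsq hu2m) (hdm0 ((5:ℝ)/2) (by norm_num)))
        (ae_of_all _ fun x => ?_)
      rw [Real.norm_eq_abs, abs_div, abs_of_nonneg (sq_nonneg _), abs_of_pos (hdenpos _ _)]
      exact div_le_self (sq_nonneg _) (hden1 _ _ (by norm_num))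
    have hI2' : IntegrableOn (fun t => u2 t ^ 2 * u1 t * φ1 t
        / (1 + (u1 t) ^ 2) ^ ((7:ℝ)/2)) (Ioc (0:ℝ) 1) := by
      have := hI2
      rwa [intervalIntegrable_iff, hIoc] at this
    have hI2abs : |∫ t in (0:ℝ)..1, u2 t ^ 2 * u1 t * φ1 t / (1 + (u1 t) ^ 2) ^ ((7:ℝ)/2)|
        ≤ (M / 2) * elE u1 u2 := by
      rw [intervalIntegral.integral_of_le h01]
      calc |∫ t in Ioc (0:ℝ) 1, u2 t ^ 2 * u1 t * φ1 t / (1 + (u1 t) ^ 2) ^ ((7:ℝ)/2)|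
          ≤ ∫ t in Ioc (0:ℝ) 1, |u2 t ^ 2 * u1 t * φ1 t / (1 + (u1 t) ^ 2) ^ ((7:ℝ)/2)| := by
            exact
              norm_integral_le_integral_norm (μ := volume.restrict (Ioc (0:ℝ) 1))
                (fun t => u2 t ^ 2 * u1 t * φ1 t / (1 + (u1 t) ^ 2) ^ ((7:ℝ)/2))
        _ ≤ ∫ t in Ioc (0:ℝ) 1, (M / 2) * (u2 t ^ 2 / (1 + (u1 t) ^ 2) ^ ((5:ℝ)/2)) := by
            refine integral_mono_ae hI2'.abs (hdiv52I.const_mul _) ?_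
            filter_upwards [ae_restrict_mem measurableSet_Ioc] with x hx
            exact ptwise_aux (u2 x) (φ1 x) (u1 x) M (hMφ x (Ioc_subset_Icc_self hx))
        _ = (M / 2) * elE u1 u2 := by
            rw [integral_const_mul, hEeq]
    -- combine
    have hsqrtE : 2 * Real.sqrt (elE u1 u2) ≤ elE u1 u2 + 1 := by
      nlinarith [Real.sq_sqrt hE0, sq_nonneg (Real.sqrt (elE u1 u2) - 1),
        Real.sqrt_nonneg (elE u1 u2)]
    rw [elDE]
    set I1 := ∫ x in (0:ℝ)..1, u2 x * φ2 x / (1 + (u1 x) ^ 2) ^ ((5:ℝ)/2)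
    set I2 := ∫ x in (0:ℝ)..1, u2 x ^ 2 * u1 x * φ1 x / (1 + (u1 x) ^ 2) ^ ((7:ℝ)/2)
    have habs2 : |2 * I1 - 5 * I2| ≤ 2 * |I1| + 5 * |I2| := by
      calc |2 * I1 - 5 * I2| ≤ |2 * I1| + |5 * I2| := abs_sub _ _
        _ = 2 * |I1| + 5 * |I2| := by rw [abs_mul, abs_mul]; norm_num
    have h1 : 2 * |I1| ≤ (elE u1 u2 + 1) * Hnorm φ2 := by
      have := mul_le_mul_of_nonneg_left hI1abs (by norm_num : (0:ℝ) ≤ 2)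
      calc 2 * |I1| ≤ 2 * (Real.sqrt (elE u1 u2) * Hnorm φ2) := this
        _ = (2 * Real.sqrt (elE u1 u2)) * Hnorm φ2 := by ring
        _ ≤ (elE u1 u2 + 1) * Hnorm φ2 := mul_le_mul_of_nonneg_right hsqrtE hN0
    have h2 : 5 * |I2| ≤ (5/2) * Cp * Hnorm φ2 * elE u1 u2 := by
      have := mul_le_mul_of_nonneg_left hI2abs (by norm_num : (0:ℝ) ≤ 5)
      calc 5 * |I2| ≤ 5 * ((M / 2) * elE u1 u2) := this
        _ = (5/2) * Cp * Hnorm φ2 * elE u1 u2 := by rw [hMdef]; ring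
    calc |2 * I1 - 5 * I2| ≤ 2 * |I1| + 5 * |I2| := habs2
      _ ≤ (elE u1 u2 + 1) * Hnorm φ2 + (5/2) * Cp * Hnorm φ2 * elE u1 u2 := add_le_add h1 h2
      _ = ((1 + (5/2) * Cp) * elE u1 u2 + 1) * Hnorm φ2 := by ring
end
end

section
/- For every u ∈ H one has E(u) ≥ sup_{x₁, x₂ ∈ (0,1), x₁ ≠ x₂} ( G(u'(x₁)) − G(u'(x₂)) )² / |x₁ − x₂|. -/
open MeasureTheory Set Filter Topology

open intervalIntegral

noncomputable section

/-- `G(z) = ∫₀^z (1 + w²)^{-5/4} dw`. -/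
def Gfun (z : ℝ) : ℝ := ∫ w in (0:ℝ)..z, (1 + w ^ 2) ^ (-(5:ℝ)/4)

def gg (z : ℝ) : ℝ := (1 + z ^ 2) ^ (-(5:ℝ)/4)

lemma one_le_base (z : ℝ) : (1:ℝ) ≤ 1 + z ^ 2 := by nlinarith [sq_nonneg z]

lemma base_pos (z : ℝ) : (0:ℝ) < 1 + z ^ 2 := by nlinarith [sq_nonneg z]

lemma gg_pos (z : ℝ) : 0 < gg z := Real.rpow_pos_of_pos (base_pos z) _

lemma gg_le_one (z : ℝ) : gg z ≤ 1 :=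
  Real.rpow_le_one_of_one_le_of_nonpos (one_le_base z) (by norm_num)

lemma continuous_gg : Continuous gg := by
  apply Continuous.rpow_const (by continuity)
  exact fun z => Or.inl (base_pos z).ne'

lemma hasDerivAt_gg (z : ℝ) :
    HasDerivAt gg ((-(5:ℝ)/4) * (1 + z ^ 2) ^ ((-(5:ℝ)/4) - 1) * (2 * z)) z := by
  have h : HasDerivAt (fun z : ℝ => 1 + z ^ 2) (2 * z) z := by
    simpa using ((hasDerivAt_pow 2 z).const_add 1)
  have := h.rpow_const (p := -(5:ℝ)/4) (Or.inl (base_pos z).ne')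
  show HasDerivAt (fun y => (1 + y ^ 2) ^ (-(5:ℝ)/4)) _ z
  convert this using 1
  ring

lemma gg_deriv_bound (z : ℝ) :
    ‖(-(5:ℝ)/4) * (1 + z ^ 2) ^ ((-(5:ℝ)/4) - 1) * (2 * z)‖ ≤ 5/2 := by
  have hb := base_pos z
  have h1 : |z| ≤ (1 + z ^ 2) ^ ((1:ℝ)/2) := by
    rw [← Real.sqrt_eq_rpow, ← Real.sqrt_sq_eq_abs]
    exact Real.sqrt_le_sqrt (by nlinarith)
  have h2 : (1 + z ^ 2) ^ ((1:ℝ)/2) * (1 + z ^ 2) ^ ((-(5:ℝ)/4) - 1) ≤ 1 := by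
    rw [← Real.rpow_add hb]
    exact Real.rpow_le_one_of_one_le_of_nonpos (one_le_base z) (by norm_num)
  have h3 : (0:ℝ) < (1 + z ^ 2) ^ ((-(5:ℝ)/4) - 1) := Real.rpow_pos_of_pos hb _
  have h4 : |z| * (1 + z ^ 2) ^ ((-(5:ℝ)/4) - 1) ≤ 1 :=
    le_trans (mul_le_mul_of_nonneg_right h1 h3.le) h2
  rw [norm_mul, norm_mul]
  simp only [Real.norm_eq_abs]
  rw [abs_of_pos h3, abs_mul]
  have : |(-(5:ℝ)/4)| = 5/4 := by norm_num
  rw [this]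
  have : |(2:ℝ)| = 2 := by norm_num
  rw [this]
  nlinarith [abs_nonneg z, h3.le, h4]

lemma gg_lip (p q : ℝ) : |gg p - gg q| ≤ 5/2 * |p - q| := by
  have := Convex.norm_image_sub_le_of_norm_hasDerivWithin_le
    (f := gg) (f' := fun z => (-(5:ℝ)/4) * (1 + z ^ 2) ^ ((-(5:ℝ)/4) - 1) * (2 * z))
    (fun x _ => (hasDerivAt_gg x).hasDerivWithinAt)
    (fun x _ => gg_deriv_bound x) convex_univ (mem_univ q) (mem_univ p)
  simpa [Real.norm_eq_abs] using this

lemma Gfun_eq (z : ℝ) : Gfun z = ∫ w in (0:ℝ)..z, gg w := rfl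

lemma gg_intInt (a b : ℝ) : IntervalIntegrable gg volume a b :=
  continuous_gg.intervalIntegrable a b

lemma Gfun_sub (p q : ℝ) : Gfun p - Gfun q = ∫ w in q..p, gg w := by
  rw [Gfun_eq, Gfun_eq]
  exact integral_interval_sub_left (gg_intInt 0 p) (gg_intInt 0 q)

lemma Gfun_lip (p q : ℝ) : |Gfun p - Gfun q| ≤ |p - q| := by
  rw [Gfun_sub]
  have := intervalIntegral.norm_integral_le_of_norm_le_const (C := 1)
    (f := gg) (a := q) (b := p) ?_
  · simpa [Real.norm_eq_abs] using this
  · intro x _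
    rw [Real.norm_eq_abs, abs_of_pos (gg_pos x)]
    exact gg_le_one x

lemma gg_abs_le_one (z : ℝ) : |gg z| ≤ 1 := by
  rw [abs_of_pos (gg_pos z)]; exact gg_le_one z

lemma keyFTC (u1 u2 : ℝ → ℝ) (h2 : IntegrableOn u2 (Icc (0:ℝ) 1))
    (hrep : ∀ x ∈ Icc (0:ℝ) 1, u1 x = u1 0 + ∫ t in (0:ℝ)..x, u2 t)
    {a b : ℝ} (ha : 0 ≤ a) (hab : a ≤ b) (hb : b ≤ 1) :
    Gfun (u1 b) - Gfun (u1 a) = ∫ t in a..b, gg (u1 t) * u2 t := by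
  set c := u1 0 with hc
  have haIcc : a ∈ Icc (0:ℝ) 1 := ⟨ha, hab.trans hb⟩
  have hbIcc : b ∈ Icc (0:ℝ) 1 := ⟨ha.trans hab, hb⟩
  -- interval integrability of u2 on subintervals of [0,1]
  have hu2II : ∀ p q : ℝ, 0 ≤ p → p ≤ q → q ≤ 1 → IntervalIntegrable u2 volume p q := by
    intro p q hp hpq hq
    rw [intervalIntegrable_iff_integrableOn_Icc_of_le hpq]
    exact h2.mono_set (Icc_subset_Icc hp hq)
  -- continuity of u1 on [0,1]
  have hu1cont : ContinuousOn u1 (Icc (0:ℝ) 1) := by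
    have hprim : ContinuousOn (fun x => c + ∫ t in (0:ℝ)..x, u2 t) (Icc (0:ℝ) 1) := by
      apply continuousOn_const.add
      have := continuousOn_primitive_interval' (μ := volume) (b₁ := (0:ℝ)) (b₂ := 1)
        (a := (0:ℝ)) (f := u2) ?_ ?_
      · simpa [uIcc_of_le (zero_le_one : (0:ℝ) ≤ 1)] using this
      · exact hu2II 0 1 le_rfl zero_le_one le_rfl
      · simp [uIcc_of_le (zero_le_one : (0:ℝ) ≤ 1)]
    exact hprim.congr hrep
  -- integrability of gg(u1)*u2 on [0,1]
  have hggu1u2 : IntegrableOn (fun t => gg (u1 t) * u2 t) (Icc (0:ℝ) 1) := by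
    apply Integrable.bdd_mul (c := 1) h2
    · exact (continuous_gg.comp_continuousOn hu1cont).aestronglyMeasurable measurableSet_Icc
    · exact Eventually.of_forall fun x => by simpa [Real.norm_eq_abs] using gg_abs_le_one (u1 x)
  have hggu1u2II : ∀ p q : ℝ, 0 ≤ p → p ≤ q → q ≤ 1 →
      IntervalIntegrable (fun t => gg (u1 t) * u2 t) volume p q := by
    intro p q hp hpq hq
    rw [intervalIntegrable_iff_integrableOn_Icc_of_le hpq]
    exact hggu1u2.mono_set (Icc_subset_Icc hp hq)
  set K := ∫ x in Icc (0:ℝ) 1, |u2 x| with hK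
  have hK0 : 0 ≤ K := setIntegral_nonneg measurableSet_Icc (fun x _ => abs_nonneg _)
  set A := Gfun (u1 b) - Gfun (u1 a) with hA
  set B := ∫ t in a..b, gg (u1 t) * u2 t with hB
  suffices hsuff : ∀ ε : ℝ, 0 < ε → ε ≤ 1 → |A - B| ≤ (3 + 5/2*(K+1)) * ε by
    by_contra hne
    have hd : 0 < |A - B| := abs_pos.mpr (sub_ne_zero.mpr hne)
    set C := 3 + 5/2*(K+1) with hCdef
    have hC : 0 < C := by positivity
    set ε := min 1 (|A - B| / (2*C)) with hε
    have hεpos : 0 < ε := lt_min one_pos (by positivity)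
    have h1 := hsuff ε hεpos (min_le_left _ _)
    have h2' : C * ε ≤ C * (|A - B| / (2*C)) :=
      mul_le_mul_of_nonneg_left (min_le_right _ _) hC.le
    have : C * (|A - B| / (2*C)) = |A - B| / 2 := by field_simp
    have hfin : |A - B| ≤ |A - B| / 2 := h1.trans (h2'.trans_eq this)
    linarith
  intro ε hε hε1
  -- continuous approximation of u2 in L¹
  set f := (Icc (0:ℝ) 1).indicator u2 with hf
  have hfInt : Integrable f volume := h2.integrable_indicator measurableSet_Icc
  obtain ⟨v, -, hv_close, hv_cont, hv_int⟩ :=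
    hfInt.exists_hasCompactSupport_integral_sub_le hε
  have hclose : ∫ x in Icc (0:ℝ) 1, |u2 x - v x| ≤ ε := by
    have heq : ∀ x ∈ Icc (0:ℝ) 1, |u2 x - v x| = ‖f x - v x‖ := by
      intro x hx; rw [Real.norm_eq_abs, hf, indicator_of_mem hx]
    calc ∫ x in Icc (0:ℝ) 1, |u2 x - v x| = ∫ x in Icc (0:ℝ) 1, ‖f x - v x‖ :=
          setIntegral_congr_fun measurableSet_Icc heq
      _ ≤ ∫ x, ‖f x - v x‖ :=
          setIntegral_le_integral (hfInt.sub hv_int).norm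
            (Eventually.of_forall fun x => norm_nonneg _)
      _ ≤ ε := hv_close
  -- the C¹ approximation of u1
  set w := fun x => c + ∫ t in (0:ℝ)..x, v t with hw
  have hw_deriv : ∀ x : ℝ, HasDerivAt w (v x) x := fun x =>
    ((hv_cont.integral_hasStrictDerivAt 0 x).hasDerivAt).const_add c
  have hsub : ∫ t in a..b, v t • (gg ∘ w) t = ∫ z in w a..w b, gg z :=
    integral_comp_smul_deriv (fun x _ => hw_deriv x) hv_cont.continuousOn continuous_gg
  have hw_eq : Gfun (w b) - Gfun (w a) = ∫ t in a..b, v t * gg (w t) := by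
    rw [Gfun_sub, ← hsub]; simp [Function.comp]
  -- estimate |u1 x - w x| ≤ ε on [0,1]
  have hvII : ∀ p q : ℝ, IntervalIntegrable v volume p q := fun p q =>
    hv_cont.intervalIntegrable p q
  have habsII : IntervalIntegrable (fun t => |u2 t - v t|) volume 0 1 :=
    ((hu2II 0 1 le_rfl zero_le_one le_rfl).sub (hvII 0 1)).abs
  have hint01 : ∫ t in (0:ℝ)..1, |u2 t - v t| ≤ ε := by
    rw [intervalIntegral.integral_of_le zero_le_one, ← integral_Icc_eq_integral_Ioc]
    exact hclose
  have hd1 : ∀ x ∈ Icc (0:ℝ) 1, |u1 x - w x| ≤ ε := by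
    intro x hx
    rw [hrep x hx, hw]
    have : c + (∫ t in (0:ℝ)..x, u2 t) - (c + ∫ t in (0:ℝ)..x, v t)
        = ∫ t in (0:ℝ)..x, (u2 t - v t) := by
      rw [intervalIntegral.integral_sub (hu2II 0 x le_rfl hx.1 hx.2) (hvII 0 x)]; ring
    rw [this]
    calc |∫ t in (0:ℝ)..x, (u2 t - v t)| ≤ ∫ t in (0:ℝ)..x, |u2 t - v t| :=
          intervalIntegral.abs_integral_le_integral_abs hx.1
      _ ≤ ∫ t in (0:ℝ)..1, |u2 t - v t| := by
          apply integral_mono_interval le_rfl hx.1 hx.2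
          · exact Eventually.of_forall fun t => abs_nonneg _
          · exact habsII
      _ ≤ ε := hint01
  -- estimate |A - (Gfun (w b) - Gfun (w a))| ≤ 2ε
  have hA_est : |A - (Gfun (w b) - Gfun (w a))| ≤ 2 * ε := by
    have e1 : |Gfun (u1 b) - Gfun (w b)| ≤ ε := (Gfun_lip _ _).trans (hd1 b hbIcc)
    have e2 : |Gfun (u1 a) - Gfun (w a)| ≤ ε := (Gfun_lip _ _).trans (hd1 a haIcc)
    have : A - (Gfun (w b) - Gfun (w a))
        = (Gfun (u1 b) - Gfun (w b)) - (Gfun (u1 a) - Gfun (w a)) := by rw [hA]; ring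
    rw [this]
    calc |(Gfun (u1 b) - Gfun (w b)) - (Gfun (u1 a) - Gfun (w a))|
        ≤ |Gfun (u1 b) - Gfun (w b)| + |Gfun (u1 a) - Gfun (w a)| := abs_sub _ _
      _ ≤ 2 * ε := by linarith
  -- continuity of w
  have hw_cont : Continuous w :=
    continuous_iff_continuousAt.mpr fun x => (hw_deriv x).differentiableAt.continuousAt
  -- ∫ |v| over [0,1] is at most K+1
  have hsubInt : IntegrableOn (fun t => |u2 t - v t|) (Icc (0:ℝ) 1) volume := by
    exact (h2.sub hv_int.integrableOn).abs
  have hvabs : ∫ t in Icc (0:ℝ) 1, |v t| ≤ K + 1 := by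
    have hle : ∀ t ∈ Icc (0:ℝ) 1, |v t| ≤ |u2 t| + |u2 t - v t| := by
      intro t _
      calc |v t| = |u2 t - (u2 t - v t)| := by ring_nf
        _ ≤ |u2 t| + |u2 t - v t| := abs_sub _ _
    calc ∫ t in Icc (0:ℝ) 1, |v t|
        ≤ ∫ t in Icc (0:ℝ) 1, (|u2 t| + |u2 t - v t|) := by
          apply setIntegral_mono_on hv_int.abs.integrableOn
            (h2.abs.add hsubInt) measurableSet_Icc hle
      _ = K + ∫ t in Icc (0:ℝ) 1, |u2 t - v t| := by
          rw [integral_add h2.abs hsubInt]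
      _ ≤ K + 1 := by linarith [hclose]
  have hv01 : ∫ t in (0:ℝ)..1, |v t| ≤ K + 1 := by
    rw [intervalIntegral.integral_of_le zero_le_one, ← integral_Icc_eq_integral_Ioc]
    exact hvabs
  -- pointwise estimate of the integrands
  have hptw : ∀ t ∈ Icc a b, |gg (u1 t) * u2 t - v t * gg (w t)|
      ≤ |u2 t - v t| + 5/2 * ε * |v t| := by
    intro t ht
    have ht01 : t ∈ Icc (0:ℝ) 1 := Icc_subset_Icc ha hb ht
    have e1 : |gg (u1 t)| ≤ 1 := gg_abs_le_one _
    have e2 : |gg (u1 t) - gg (w t)| ≤ 5/2 * ε := by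
      calc |gg (u1 t) - gg (w t)| ≤ 5/2 * |u1 t - w t| := gg_lip _ _
        _ ≤ 5/2 * ε := by linarith [hd1 t ht01]
    calc |gg (u1 t) * u2 t - v t * gg (w t)|
        = |gg (u1 t) * (u2 t - v t) + (gg (u1 t) - gg (w t)) * v t| := by ring_nf
      _ ≤ |gg (u1 t) * (u2 t - v t)| + |(gg (u1 t) - gg (w t)) * v t| := abs_add_le _ _
      _ = |gg (u1 t)| * |u2 t - v t| + |gg (u1 t) - gg (w t)| * |v t| := by
          rw [abs_mul, abs_mul]
      _ ≤ |u2 t - v t| + 5/2 * ε * |v t| := by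
          have := abs_nonneg (u2 t - v t)
          have := abs_nonneg (v t)
          have := abs_nonneg (gg (u1 t) - gg (w t))
          nlinarith
  set D := ∫ t in a..b, v t * gg (w t) with hD
  -- integrability of the approximating integrand
  have hvggwII : ∀ p q : ℝ, IntervalIntegrable (fun t => v t * gg (w t)) volume p q :=
    fun p q => (hv_cont.mul (continuous_gg.comp hw_cont)).intervalIntegrable p q
  have hFII : IntervalIntegrable (fun t => gg (u1 t) * u2 t - v t * gg (w t)) volume a b :=
    (hggu1u2II a b ha hab hb).sub (hvggwII a b)
  have hrhsII : IntervalIntegrable (fun t => |u2 t - v t| + 5/2 * ε * |v t|) volume 0 1 :=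
    habsII.add ((continuous_const.mul hv_cont.abs).intervalIntegrable 0 1)
  have hsubIcc : Icc a b ⊆ Icc (0:ℝ) 1 := Icc_subset_Icc ha hb
  have hrhsII_ab : IntervalIntegrable (fun t => |u2 t - v t| + 5/2 * ε * |v t|) volume a b := by
    apply hrhsII.mono_set
    rw [uIcc_of_le hab, uIcc_of_le zero_le_one]
    exact hsubIcc
  have hB_est : |B - D| ≤ ε + 5/2 * ε * (K + 1) := by
    have hBD : B - D = ∫ t in a..b, (gg (u1 t) * u2 t - v t * gg (w t)) := by
      rw [hB, hD, intervalIntegral.integral_sub (hggu1u2II a b ha hab hb) (hvggwII a b)]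
    rw [hBD]
    calc |∫ t in a..b, (gg (u1 t) * u2 t - v t * gg (w t))|
        ≤ ∫ t in a..b, |gg (u1 t) * u2 t - v t * gg (w t)| :=
          intervalIntegral.abs_integral_le_integral_abs hab
      _ ≤ ∫ t in a..b, (|u2 t - v t| + 5/2 * ε * |v t|) :=
          intervalIntegral.integral_mono_on hab hFII.abs hrhsII_ab hptw
      _ ≤ ∫ t in (0:ℝ)..1, (|u2 t - v t| + 5/2 * ε * |v t|) := by
          apply integral_mono_interval ha hab hb
          · exact Eventually.of_forall fun t => by positivity
          · exact hrhsII
      _ = (∫ t in (0:ℝ)..1, |u2 t - v t|) + 5/2 * ε * ∫ t in (0:ℝ)..1, |v t| := by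
          rw [intervalIntegral.integral_add (g := fun t => 5/2 * ε * |v t|) habsII
            ((continuous_const.mul hv_cont.abs).intervalIntegrable 0 1 :
              IntervalIntegrable (fun t => 5/2 * ε * |v t|) volume 0 1),
            intervalIntegral.integral_const_mul]
      _ ≤ ε + 5/2 * ε * (K + 1) := by
          have h52 : (0:ℝ) ≤ 5/2 * ε := by positivity
          nlinarith [hint01, hv01]
  -- conclusion
  have hsplit : A - B = (A - (Gfun (w b) - Gfun (w a))) + (D - B) := by
    rw [hw_eq]; ring
  calc |A - B| ≤ |A - (Gfun (w b) - Gfun (w a))| + |D - B| := by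
        rw [hsplit]; exact abs_add_le _ _
    _ ≤ 2 * ε + (ε + 5/2 * ε * (K + 1)) := by
        rw [abs_sub_comm D B]; exact add_le_add hA_est hB_est
    _ = (3 + 5/2*(K+1)) * ε := by ring

lemma cauchy_schwarz_interval {h : ℝ → ℝ} {a b : ℝ} (hab : a ≤ b)
    (hint : IntegrableOn h (Ioc a b)) (hint2 : IntegrableOn (fun t => h t ^ 2) (Ioc a b)) :
    (∫ t in a..b, h t) ^ 2 ≤ (b - a) * ∫ t in a..b, h t ^ 2 := by
  rcases eq_or_lt_of_le hab with rfl | hlt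
  · simp
  set L := b - a with hL
  have hL0 : 0 < L := by simp only [hL]; linarith
  set I := ∫ t in Ioc a b, h t with hI
  set S := ∫ t in Ioc a b, h t ^ 2 with hS
  have hIeq : ∫ t in a..b, h t = I := intervalIntegral.integral_of_le hab
  have hSeq : ∫ t in a..b, h t ^ 2 = S := intervalIntegral.integral_of_le hab
  rw [hIeq, hSeq]
  set m := I / L with hm
  have hconst : IntegrableOn (fun _ : ℝ => m ^ 2) (Ioc a b) volume :=
    integrableOn_const measure_Ioc_lt_top.ne
  have hmh : IntegrableOn (fun t => 2 * m * h t) (Ioc a b) volume := hint.const_mul _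
  have hexp : ∫ t in Ioc a b, (h t - m) ^ 2 = S - 2 * m * I + m ^ 2 * L := by
    have e : ∀ t : ℝ, (h t - m) ^ 2 = h t ^ 2 - 2 * m * h t + m ^ 2 := fun t => by ring
    simp_rw [e]
    have s1 : ∫ t in Ioc a b, (h t ^ 2 - 2 * m * h t + m ^ 2)
        = (∫ t in Ioc a b, (h t ^ 2 - 2 * m * h t)) + ∫ _t in Ioc a b, m ^ 2 :=
      integral_add (by exact hint2.sub hmh) hconst
    have s2 : ∫ t in Ioc a b, (h t ^ 2 - 2 * m * h t)
        = (∫ t in Ioc a b, h t ^ 2) - ∫ t in Ioc a b, 2 * m * h t :=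
      integral_sub hint2 hmh
    have s3 : ∫ t in Ioc a b, 2 * m * h t = 2 * m * I := MeasureTheory.integral_const_mul _ _
    have s4 : ∫ _t in Ioc a b, m ^ 2 = m ^ 2 * L := by
      rw [setIntegral_const, Real.volume_real_Ioc_of_le hab, smul_eq_mul, mul_comm]
    rw [s1, s2, s3, s4]
  have hnn : 0 ≤ ∫ t in Ioc a b, (h t - m) ^ 2 :=
    integral_nonneg fun t => sq_nonneg _
  rw [hexp] at hnn
  have e1 : 2 * m * I = 2 * I ^ 2 / L := by rw [hm]; field_simp
  have e2 : m ^ 2 * L = I ^ 2 / L := by rw [hm]; field_simp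
  rw [e1, e2] at hnn
  have e3 : (2:ℝ) * I ^ 2 / L = 2 * (I ^ 2 / L) := by ring
  rw [e3] at hnn
  have : I ^ 2 / L ≤ S := by linarith
  calc I ^ 2 = I ^ 2 / L * L := by field_simp
    _ ≤ S * L := mul_le_mul_of_nonneg_right this hL0.le
    _ = L * S := mul_comm _ _

lemma u1_contOn (u1 u2 : ℝ → ℝ) (h2 : IntegrableOn u2 (Icc (0:ℝ) 1))
    (hrep : ∀ x ∈ Icc (0:ℝ) 1, u1 x = u1 0 + ∫ t in (0:ℝ)..x, u2 t) :
    ContinuousOn u1 (Icc (0:ℝ) 1) := by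
  have hprim : ContinuousOn (fun x => u1 0 + ∫ t in (0:ℝ)..x, u2 t) (Icc (0:ℝ) 1) := by
    apply continuousOn_const.add
    have := continuousOn_primitive_interval' (μ := volume) (b₁ := (0:ℝ)) (b₂ := 1)
      (a := (0:ℝ)) (f := u2) ?_ ?_
    · simpa [uIcc_of_le (zero_le_one : (0:ℝ) ≤ 1)] using this
    · rw [intervalIntegrable_iff_integrableOn_Icc_of_le zero_le_one]; exact h2
    · simp [uIcc_of_le (zero_le_one : (0:ℝ) ≤ 1)]
  exact hprim.congr hrep

/-- **A standard estimate for the elastic energy.** For every `u ∈ H`,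
`E(u) ≥ sup_{x₁ ≠ x₂ ∈ (0,1)} (G(u'(x₁)) - G(u'(x₂)))² / |x₁ - x₂|`. -/
theorem elastic_energy_estimate
    (u u1 u2 : ℝ → ℝ) (hu : MemH u u1 u2) :
    ∀ x₁ ∈ Ioo (0:ℝ) 1, ∀ x₂ ∈ Ioo (0:ℝ) 1, x₁ ≠ x₂ →
      (Gfun (u1 x₁) - Gfun (u1 x₂)) ^ 2 / |x₁ - x₂| ≤ elE u1 u2 := by
  obtain ⟨-, hrep, h2, h2sq, -, -⟩ := hu
  have hu1cont : ContinuousOn u1 (Icc (0:ℝ) 1) := u1_contOn u1 u2 h2 hrep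
  set h := fun t => gg (u1 t) * u2 t with hh
  have hIOn : IntegrableOn h (Icc (0:ℝ) 1) := by
    apply Integrable.bdd_mul (c := 1) h2
    · exact (continuous_gg.comp_continuousOn hu1cont).aestronglyMeasurable measurableSet_Icc
    · exact Eventually.of_forall fun x => by simpa [Real.norm_eq_abs] using gg_abs_le_one (u1 x)
  have hIOn2 : IntegrableOn (fun t => h t ^ 2) (Icc (0:ℝ) 1) := by
    have e : (fun t => h t ^ 2) = fun t => gg (u1 t) ^ 2 * u2 t ^ 2 :=
      funext fun t => by rw [hh]; ring
    rw [e]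
    apply Integrable.bdd_mul (c := 1) h2sq
    · exact ((continuous_gg.comp_continuousOn hu1cont).pow 2).aestronglyMeasurable
        measurableSet_Icc
    · refine Eventually.of_forall fun x => ?_
      have := gg_abs_le_one (u1 x)
      have h0 := abs_nonneg (gg (u1 x))
      rw [Real.norm_eq_abs, abs_pow]
      nlinarith
  have elE_eq : elE u1 u2 = ∫ t in (0:ℝ)..1, h t ^ 2 := by
    apply intervalIntegral.integral_congr
    intro t _
    show u2 t ^ 2 / (1 + u1 t ^ 2) ^ ((5:ℝ)/2) = (gg (u1 t) * u2 t) ^ 2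
    have hb := base_pos (u1 t)
    have hgg2 : gg (u1 t) ^ 2 = (1 + u1 t ^ 2) ^ (-((5:ℝ)/2)) := by
      rw [show gg (u1 t) = (1 + u1 t ^ 2) ^ (-(5:ℝ)/4) from rfl,
        ← Real.rpow_natCast ((1 + u1 t ^ 2) ^ (-(5:ℝ)/4)) 2, ← Real.rpow_mul hb.le]
      norm_num
    rw [mul_pow, hgg2, Real.rpow_neg hb.le, div_eq_mul_inv]
    ring
  suffices H : ∀ a b : ℝ, 0 < a → a < b → b < 1 →
      (Gfun (u1 b) - Gfun (u1 a)) ^ 2 / |b - a| ≤ elE u1 u2 by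
    intro x₁ hx₁ x₂ hx₂ hne
    rcases hne.lt_or_gt with hlt | hlt
    · have := H x₁ x₂ hx₁.1 hlt hx₂.2
      rw [show (Gfun (u1 x₁) - Gfun (u1 x₂)) ^ 2 = (Gfun (u1 x₂) - Gfun (u1 x₁)) ^ 2 by ring,
        abs_sub_comm]
      exact this
    · exact H x₂ x₁ hx₂.1 hlt hx₁.2
  intro a b ha0 hab hb1
  have ha : (0:ℝ) ≤ a := ha0.le
  have hb : b ≤ 1 := hb1.le
  rw [abs_of_pos (by linarith : (0:ℝ) < b - a), div_le_iff₀ (by linarith : (0:ℝ) < b - a)]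
  rw [keyFTC u1 u2 h2 hrep ha hab.le hb]
  have hsub : Ioc a b ⊆ Icc (0:ℝ) 1 :=
    Ioc_subset_Icc_self.trans (Icc_subset_Icc ha hb)
  have hII2 : IntervalIntegrable (fun t => h t ^ 2) volume 0 1 := by
    rw [intervalIntegrable_iff_integrableOn_Icc_of_le zero_le_one]; exact hIOn2
  calc (∫ t in a..b, h t) ^ 2
      ≤ (b - a) * ∫ t in a..b, h t ^ 2 :=
        cauchy_schwarz_interval hab.le (hIOn.mono_set hsub) (hIOn2.mono_set hsub)
    _ ≤ (b - a) * ∫ t in (0:ℝ)..1, h t ^ 2 := by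
        apply mul_le_mul_of_nonneg_left _ (by linarith : (0:ℝ) ≤ b - a)
        exact integral_mono_interval ha hab.le hb
          (Eventually.of_forall fun t => sq_nonneg _) hII2
    _ = elE u1 u2 * (b - a) := by rw [elE_eq]; ring
end
end
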